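/- arXiv:1712.03777 — 2 statements merged into one kernel-verified Lean document; each statement's English description precedes it below -/
import Mathlib

section
/- Let μ be a partition of m and t a sequence of type μ. Then every term of t is good (equivalently μ^♯(t) = μ) if and only if, when reading t from left to right, every initial segment contains at least as many i's as (i+1)'s for every i ≥ 1 (i.e. t is a lattice word / reverse reading word condition). -/
/- Symbols are 0-based: the paper's symbol `i ∈ {1, …, r}` is `i - 1` here, and the
paper's `μ_i` is `μ.blocks.getD (i-1) 0`.  Good/bad terms: all 0's are good, an
`a > 0` is good iff the number of previous good `(a-1)`'s strictly exceeds the number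
of previous good `a`'s.  "Every term of `t` is good" is expressed, as in the paper,
by `μ♯(t) = μ`. -/

def goodStep (g : ℕ → ℕ) (a : ℕ) : ℕ → ℕ :=
  if a = 0 ∨ g a < g (a - 1) then Function.update g a (g a + 1) else g

/-- `goodCounts t s` = number of good `s`'s in `t`; this is `μ♯_s(t)`. -/
def goodCounts (t : List ℕ) : ℕ → ℕ :=
  t.foldl goodStep (fun _ => 0)

def ofTypeL {m : ℕ} (μ : Composition m) (t : List ℕ) : Prop :=
  t.length = m ∧ (∀ a ∈ t, a < μ.length) ∧
    ∀ k : Fin μ.length, t.count (k : ℕ) = μ.blocksFun k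

lemma goodStep_ge (g : ℕ → ℕ) (a i : ℕ) : g i ≤ goodStep g a i := by
  unfold goodStep
  split
  · rw [Function.update_apply]
    by_cases h : i = a
    · subst h; rw [if_pos rfl]; omega
    · rw [if_neg h]
  · exact le_refl _

lemma goodStep_le (g : ℕ → ℕ) (a i : ℕ) :
    goodStep g a i ≤ g i + if i = a then 1 else 0 := by
  unfold goodStep
  split
  · rw [Function.update_apply]
    by_cases h : i = a
    · subst h; rw [if_pos rfl, if_pos rfl]
    · rw [if_neg h, if_neg h]; omega
  · split <;> omega

lemma goodStep_mono (g : ℕ → ℕ) (hg : ∀ i, g (i + 1) ≤ g i) (a : ℕ) :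
    ∀ i, goodStep g a (i + 1) ≤ goodStep g a i := by
  intro i
  unfold goodStep
  split
  · rename_i h
    rw [Function.update_apply, Function.update_apply]
    by_cases h1 : i + 1 = a
    · have ha : a ≠ 0 := by omega
      have h2 : g a < g (a - 1) := by tauto
      have heq : a - 1 = i := by omega
      rw [heq] at h2
      rw [if_pos h1, if_neg (by omega)]
      omega
    · rw [if_neg h1]
      by_cases h2 : i = a
      · subst h2; rw [if_pos rfl]; have := hg i; omega
      · rw [if_neg h2]; exact hg i
  · exact hg i

lemma fold_mono (v : List ℕ) : ∀ g : ℕ → ℕ, (∀ i, g (i + 1) ≤ g i) →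
    ∀ i, v.foldl goodStep g (i + 1) ≤ v.foldl goodStep g i := by
  induction v with
  | nil => intro g hg i; exact hg i
  | cons a v ih => intro g hg i; exact ih _ (goodStep_mono g hg a) i

lemma fold_ge (v : List ℕ) : ∀ g : ℕ → ℕ, ∀ i, g i ≤ v.foldl goodStep g i := by
  induction v with
  | nil => intro g i; exact le_refl _
  | cons a v ih =>
    intro g i
    exact le_trans (goodStep_ge g a i) (ih _ i)

lemma fold_le (v : List ℕ) : ∀ g : ℕ → ℕ, ∀ i,
    v.foldl goodStep g i ≤ g i + v.count i := by
  induction v with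
  | nil => intro g i; simp
  | cons a v ih =>
    intro g i
    by_cases h : i = a
    · subst h
      rw [List.foldl_cons, List.count_cons_self]
      have h1 := ih (goodStep g i) i
      have h2 := goodStep_le g i i
      rw [if_pos rfl] at h2
      omega
    · rw [List.foldl_cons, List.count_cons_of_ne (Ne.symm h)]
      have h1 := ih (goodStep g a) i
      have h2 := goodStep_le g a i
      rw [if_neg h] at h2
      omega

lemma goodCounts_mono (t : List ℕ) (i : ℕ) :
    goodCounts t (i + 1) ≤ goodCounts t i :=
  fold_mono t _ (fun _ => le_refl 0) i

lemma goodCounts_le_count (t : List ℕ) (i : ℕ) : goodCounts t i ≤ t.count i := by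
  have := fold_le t (fun _ => 0) i
  simpa [goodCounts] using this

lemma goodCounts_prefix_eq (u v : List ℕ)
    (h : ∀ i, goodCounts (u ++ v) i = (u ++ v).count i) :
    ∀ i, goodCounts u i = u.count i := by
  intro i
  have h1 : goodCounts (u ++ v) i = v.foldl goodStep (goodCounts u) i := by
    simp [goodCounts, List.foldl_append]
  have h2 := fold_le v (goodCounts u) i
  have h3 := goodCounts_le_count u i
  have h4 := h i
  rw [List.count_append] at h4
  omega

lemma lattice_good (t : List ℕ)
    (hl : ∀ k i : ℕ, (t.take k).count (i + 1) ≤ (t.take k).count i) :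
    ∀ i, goodCounts t i = t.count i := by
  induction t using List.reverseRecOn with
  | nil => intro i; simp [goodCounts]
  | append_singleton u a ih =>
    have hu : ∀ k i : ℕ, (u.take k).count (i + 1) ≤ (u.take k).count i := by
      intro k i
      have := hl k i
      rcases le_or_gt k u.length with hk | hk
      · rwa [List.take_append_of_le_length hk] at this
      · have := hl u.length i
        rw [List.take_append_of_le_length (le_refl _), List.take_length] at this
        rwa [List.take_of_length_le (by omega)]
    have ihu := ih hu
    have hfold : goodCounts (u ++ [a]) = goodStep (goodCounts u) a := by
      simp [goodCounts, List.foldl_append]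
    intro i
    rw [hfold]
    rcases Nat.eq_zero_or_pos a with ha | ha
    · subst ha
      rw [goodStep, if_pos (Or.inl rfl), Function.update_apply, List.count_append]
      by_cases h : i = 0
      · subst h
        have hc : List.count 0 [0] = 1 := by simp
        rw [if_pos rfl, hc, ihu]
      · have hc : List.count i [0] = 0 := List.count_eq_zero.mpr (by simp [h])
        rw [if_neg h, hc, ihu]; omega
    · -- a = b + 1; lattice at full list gives strictness
      have hb : a - 1 + 1 = a := by omega
      have hne : a - 1 ≠ a := by omega
      have hfull := hl (u.length + 1) (a - 1)
      rw [List.take_of_length_le (by simp), hb, List.count_append, List.count_append] at hfull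
      have c1 : List.count a [a] = 1 := by simp
      have c2 : List.count (a - 1) [a] = 0 := List.count_eq_zero.mpr (by simp [hne])
      rw [c1, c2] at hfull
      have hlt : goodCounts u a < goodCounts u (a - 1) := by
        rw [ihu, ihu]; omega
      rw [goodStep, if_pos (Or.inr hlt), Function.update_apply, List.count_append]
      by_cases hia : i = a
      · subst hia
        have hc : List.count i [i] = 1 := by simp
        rw [if_pos rfl, hc, ihu]
      · have hc : List.count i [a] = 0 := List.count_eq_zero.mpr (by simp [hia])
        rw [if_neg hia, hc, ihu]; omega

/-- for a partition `μ` of `m` and a sequence `t` of type `μ`, every term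
of `t` is good (i.e. `μ♯(t) = μ`) iff every initial segment of `t` contains, for each
`i`, at least as many `i`'s as `(i+1)`'s (`t` is a lattice word). -/
theorem stmt17 (m : ℕ) (μ : Composition m)
    (hμ : List.Pairwise (· ≥ ·) μ.blocks)
    (t : List ℕ) (ht : ofTypeL μ t) :
    (∀ i : ℕ, goodCounts t i = μ.blocks.getD i 0) ↔
      (∀ k i : ℕ, (t.take k).count (i + 1) ≤ (t.take k).count i) := by
  obtain ⟨hlen, hmem, hcount⟩ := ht
  have hc : ∀ i : ℕ, t.count i = μ.blocks.getD i 0 := by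
    intro i
    rcases lt_or_ge i μ.length with h | h
    · have := hcount ⟨i, h⟩
      rw [this]
      rw [List.getD_eq_getElem _ _ h]
      rfl
    · rw [List.count_eq_zero.mpr (fun hi => absurd (hmem i hi) (not_lt.mpr h)),
        List.getD_eq_default _ _ h]
  constructor
  · intro hg k i
    have hg' : ∀ i, goodCounts t i = t.count i := fun i => (hg i).trans (hc i).symm
    have hpref : ∀ j, goodCounts (t.take k) j = (t.take k).count j := by
      have := goodCounts_prefix_eq (t.take k) (t.drop k)
      rw [List.take_append_drop] at this
      exact this hg'
    rw [← hpref, ← hpref]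
    exact goodCounts_mono _ i
  · intro hl i
    rw [lattice_good t hl i, hc i]
end

section
/- Let λ and μ be compositions of m with λ'' = μ' (i.e. μ is a rearrangement of the conjugate λ' of the partition-rearrangement of λ). Then there exists a unique diagram D (finite subset of ℤ² with no empty rows or columns) whose row-composition is λ and whose column-composition is μ, and this D is a special diagram (obtained from a Young diagram by permuting rows and columns). -/
/- Diagrams are finite subsets of `ℕ × ℕ` (cells `(row, column)`, 0-based), with no
empty rows or columns before an occupied one ("principal" diagrams).  The hypothesis
`λ'' = μ'`, i.e. "`μ` is a rearrangement of `λ'`", is expressed by saying that the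
multiset of parts of `μ` equals the multiset of (nonzero) parts of the conjugate
`λ'` of `λ`, where `λ'_j = #{i : λ_i > j}` (0-based `j`). -/

/-- A principal diagram: every nonempty row (resp. column) index is preceded only by
nonempty rows (resp. columns). -/
def IsPrincipalDiagram (D : Finset (ℕ × ℕ)) : Prop :=
  (∀ c ∈ D, ∀ i < c.1, ∃ j, (i, j) ∈ D) ∧ (∀ c ∈ D, ∀ j < c.2, ∃ i, (i, j) ∈ D)

/-- The row-composition of a diagram. -/
def rowComp (D : Finset (ℕ × ℕ)) (i : ℕ) : ℕ := (D.filter (fun c => c.1 = i)).card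

/-- The column-composition of a diagram. -/
def colComp (D : Finset (ℕ × ℕ)) (j : ℕ) : ℕ := (D.filter (fun c => c.2 = j)).card

/-- A special diagram: the image of (the cells of) a Young diagram under a permutation
of the rows and a permutation of the columns. -/
def IsSpecialDiagram (D : Finset (ℕ × ℕ)) : Prop :=
  ∃ (f g : ℕ → ℕ), Function.Bijective f ∧ Function.Bijective g ∧
    ∃ Y : YoungDiagram, D = Y.cells.image (fun c => (f c.1, g c.2))

namespace S18


/-- value of list at index, 0 default -/
def val (L : List ℕ) (i : ℕ) : ℕ := L.getD i 0

/-- rank of index i (number of indices "before" i in the decreasing order). -/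
def rk (L : List ℕ) (i : ℕ) : ℕ :=
  ((Finset.range L.length).filter
    (fun i' => val L i < val L i' ∨ (val L i' = val L i ∧ i' < i))).card

/-- number of entries > t -/
def cnt (L : List ℕ) (t : ℕ) : ℕ :=
  ((Finset.range L.length).filter (fun i' => t < val L i')).card

lemma card_filter_range_index (L : List ℕ) (p : ℕ → Bool) :
    ((Finset.range L.length).filter (fun i => p (L.getD i 0))).card
      = (L.filter p).length := by
  induction L with
  | nil => simp
  | cons a L ih =>
    rw [Finset.card_filter] at ih ⊢
    rw [List.length_cons, Finset.sum_range_succ', List.filter_cons]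
    simp only [List.getD_cons_succ, List.getD_cons_zero, ih]
    by_cases hp : p a <;> simp [hp, add_comm]

lemma cnt_eq (L : List ℕ) (t : ℕ) :
    cnt L t = (L.filter (fun a => decide (t < a))).length := by
  rw [cnt, ← card_filter_range_index L (fun a => decide (t < a))]
  simp [val]

lemma rk_lt (L : List ℕ) {i : ℕ} (hi : i < L.length) : rk L i < L.length := by
  have h1 : ((Finset.range L.length).filter
      (fun i' => val L i < val L i' ∨ (val L i' = val L i ∧ i' < i)))
      ⊆ (Finset.range L.length).erase i := by
    intro x hx
    simp only [Finset.mem_filter, Finset.mem_range] at hx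
    simp only [Finset.mem_erase, Finset.mem_range]
    refine ⟨?_, hx.1⟩
    rintro rfl
    rcases hx.2 with h | h
    · omega
    · omega
  have := Finset.card_le_card h1
  rw [Finset.card_erase_of_mem (by simpa using hi), Finset.card_range] at this
  rw [rk]
  omega

/-- key equivalence -/
lemma rk_lt_cnt_iff (L : List ℕ) {i : ℕ} (hi : i < L.length) (t : ℕ) :
    rk L i < cnt L t ↔ t < val L i := by
  constructor
  · intro hlt
    by_contra hle
    push_neg at hle
    have hsub : ((Finset.range L.length).filter (fun i' => t < val L i')) ⊆
        ((Finset.range L.length).filter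
          (fun i' => val L i < val L i' ∨ (val L i' = val L i ∧ i' < i))) := by
      intro x hx
      simp only [Finset.mem_filter] at hx ⊢
      exact ⟨hx.1, Or.inl (by omega)⟩
    have := Finset.card_le_card hsub
    rw [rk, cnt] at hlt
    omega
  · intro ht
    have hnotmem : i ∉ ((Finset.range L.length).filter
        (fun i' => val L i < val L i' ∨ (val L i' = val L i ∧ i' < i))) := by
      simp only [Finset.mem_filter, Finset.mem_range]
      rintro ⟨-, h | h⟩ <;> omega
    have hsub : insert i ((Finset.range L.length).filter
        (fun i' => val L i < val L i' ∨ (val L i' = val L i ∧ i' < i))) ⊆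
        ((Finset.range L.length).filter (fun i' => t < val L i')) := by
      intro x hx
      rcases Finset.mem_insert.mp hx with rfl | hx
      · simp only [Finset.mem_filter, Finset.mem_range]; exact ⟨hi, ht⟩
      · simp only [Finset.mem_filter, Finset.mem_range] at hx ⊢
        refine ⟨hx.1, ?_⟩
        rcases hx.2 with h | h <;> omega
    have := Finset.card_le_card hsub
    rw [Finset.card_insert_of_notMem hnotmem] at this
    rw [rk, cnt]
    omega

lemma rk_strict (L : List ℕ) {i i' : ℕ} (hi : i < L.length) (hi' : i' < L.length)
    (h : val L i' < val L i ∨ (val L i = val L i' ∧ i < i')) : rk L i < rk L i' := by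
  have hnotmem : i ∉ ((Finset.range L.length).filter
      (fun j => val L i < val L j ∨ (val L j = val L i ∧ j < i))) := by
    simp only [Finset.mem_filter, Finset.mem_range]
    rintro ⟨-, h | h⟩ <;> omega
  have hsub : insert i ((Finset.range L.length).filter
      (fun j => val L i < val L j ∨ (val L j = val L i ∧ j < i))) ⊆
      ((Finset.range L.length).filter
        (fun j => val L i' < val L j ∨ (val L j = val L i' ∧ j < i'))) := by
    intro x hx
    rcases Finset.mem_insert.mp hx with rfl | hx
    · simp only [Finset.mem_filter, Finset.mem_range]
      refine ⟨hi, ?_⟩; rcases h with h | h <;> omega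
    · simp only [Finset.mem_filter, Finset.mem_range] at hx ⊢
      refine ⟨hx.1, ?_⟩
      rcases hx.2 with h2 | h2 <;> rcases h with h | h <;> omega
  have := Finset.card_le_card hsub
  rw [Finset.card_insert_of_notMem hnotmem] at this
  rw [rk, rk]
  omega

lemma rk_injOn (L : List ℕ) : Set.InjOn (rk L) (Finset.range L.length) := by
  intro i hi i' hi' heq
  simp only [Finset.coe_range, Set.mem_Iio] at hi hi'
  by_contra hne
  rcases Nat.lt_trichotomy (val L i) (val L i') with h | h | h
  · have := rk_strict L hi' hi (Or.inl h); omega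
  · rcases Nat.lt_or_ge i i' with hlt | hge
    · have := rk_strict L hi hi' (Or.inr ⟨h, hlt⟩); omega
    · have := rk_strict L hi' hi (Or.inr ⟨h.symm, by omega⟩); omega
  · have := rk_strict L hi hi' (Or.inl h); omega

lemma rk_image (L : List ℕ) :
    (Finset.range L.length).image (rk L) = Finset.range L.length := by
  apply Finset.eq_of_subset_of_card_le
  · intro x hx
    simp only [Finset.mem_image, Finset.mem_range] at hx ⊢
    obtain ⟨i, hi, rfl⟩ := hx
    exact rk_lt L hi
  · rw [Finset.card_image_of_injOn (rk_injOn L), Finset.card_range]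

lemma filter_lt_range (n v : ℕ) :
    (Finset.range n).filter (fun x => x < v) = Finset.range (min v n) := by
  ext x
  simp only [Finset.mem_filter, Finset.mem_range, lt_min_iff]
  omega

lemma card_rk_lt (L : List ℕ) (v : ℕ) :
    ((Finset.range L.length).filter (fun i => rk L i < v)).card = min v L.length := by
  have himg : ((Finset.range L.length).filter (fun i => rk L i < v)).image (rk L)
      = Finset.range (min v L.length) := by
    have h1 := Finset.filter_image (s := Finset.range L.length) (f := rk L)
      (p := fun x => x < v)
    rw [rk_image, filter_lt_range] at h1
    exact h1.symm
  have hinj : Set.InjOn (rk L)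
      ((Finset.range L.length).filter (fun i => rk L i < v)) :=
    (rk_injOn L).mono (by intro x hx; simpa using (Finset.mem_filter.mp hx).1)
  rw [← Finset.card_image_of_injOn hinj, himg, Finset.card_range]

/-- triangle sum lemma -/
lemma tri (n : ℕ) : ∀ S : Finset ℕ, S.card = n →
    (∑ x ∈ Finset.range n, x ≤ ∑ x ∈ S, x ∧
      (∑ x ∈ S, x = ∑ x ∈ Finset.range n, x → S = Finset.range n)) := by
  induction n with
  | zero =>
    intro S hS
    rw [Finset.card_eq_zero] at hS
    simp [hS]
  | succ n ih =>
    intro S hS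
    have hne : S.Nonempty := Finset.card_pos.mp (by omega)
    set M := S.max' hne with hM
    have hMS : M ∈ S := S.max'_mem hne
    have hMn : n ≤ M := by
      have hsub : S ⊆ Finset.range (M + 1) := by
        intro x hx
        simp only [Finset.mem_range]
        exact Nat.lt_succ_of_le (S.le_max' x hx)
      have := Finset.card_le_card hsub
      rw [Finset.card_range] at this
      omega
    have hcard : (S.erase M).card = n := by
      rw [Finset.card_erase_of_mem hMS, hS]
      omega
    obtain ⟨hle, heqc⟩ := ih (S.erase M) hcard
    have hsum : ∑ x ∈ S, x = M + ∑ x ∈ S.erase M, x :=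
      (Finset.add_sum_erase S id hMS).symm
    rw [Finset.sum_range_succ]
    constructor
    · omega
    · intro heq
      have hM' : M = n ∧ ∑ x ∈ S.erase M, x = ∑ x ∈ Finset.range n, x := by
        constructor <;> omega
      have := heqc hM'.2
      rw [← Finset.insert_erase hMS, this, hM'.1, Finset.range_add_one]

/-- the conjugate list -/
def conj (L : List ℕ) : List ℕ :=
  (List.range (L.foldr max 0)).map (fun j => (L.filter (fun a => decide (j < a))).length)

lemma conj_length (L : List ℕ) : (conj L).length = L.foldr max 0 := by simp [conj]

lemma conj_getD (L : List ℕ) {s : ℕ} (hs : s < L.foldr max 0) :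
    (conj L).getD s 0 = cnt L s := by
  rw [cnt_eq]
  rw [List.getD_eq_getElem (conj L) 0 (by rw [conj_length]; exact hs)]
  simp [conj]

lemma le_foldr_max (L : List ℕ) {a : ℕ} (ha : a ∈ L) : a ≤ L.foldr max 0 := by
  induction L with
  | nil => simp at ha
  | cons b L ih =>
    rcases List.mem_cons.mp ha with rfl | ha
    · exact le_max_left _ _
    · exact le_trans (ih ha) (le_max_right _ _)

lemma val_mem (L : List ℕ) {i : ℕ} (hi : i < L.length) : val L i ∈ L := by
  rw [val, List.getD_eq_getElem L 0 hi]
  exact List.getElem_mem hi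

lemma val_le_max (L : List ℕ) {i : ℕ} (hi : i < L.length) : val L i ≤ L.foldr max 0 :=
  le_foldr_max L (val_mem L hi)

lemma val_eq_zero (L : List ℕ) {i : ℕ} (hi : L.length ≤ i) : val L i = 0 :=
  List.getD_eq_default _ _ hi

lemma cnt_antitone (L : List ℕ) {t t' : ℕ} (h : t ≤ t') : cnt L t' ≤ cnt L t := by
  apply Finset.card_le_card
  intro x hx
  simp only [Finset.mem_filter] at hx ⊢
  exact ⟨hx.1, by omega⟩

section Main

variable (L K : List ℕ)

/-- the candidate diagram -/
def Dg : Finset (ℕ × ℕ) :=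
  (Finset.range L.length ×ˢ Finset.range K.length).filter
    (fun p => rk L p.1 < val K p.2)

lemma mem_Dg {p : ℕ × ℕ} :
    p ∈ Dg L K ↔ p.1 < L.length ∧ p.2 < K.length ∧ rk L p.1 < val K p.2 := by
  simp [Dg, Finset.mem_filter, Finset.mem_product, and_assoc]

variable (hperm : K.Perm (conj L))

include hperm

lemma len_K : K.length = L.foldr max 0 := by
  rw [hperm.length_eq, conj_length]

lemma cnt_K_eq (t : ℕ) :
    cnt K t = ((Finset.range (L.foldr max 0)).filter (fun s => t < cnt L s)).card := by
  rw [cnt_eq, (hperm.filter _).length_eq, ← cnt_eq]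
  rw [cnt, conj_length]
  congr 1
  apply Finset.filter_congr
  intro s hs
  rw [Finset.mem_range] at hs
  have heq : val (conj L) s = cnt L s := by rw [val, conj_getD L hs]
  rw [heq]

/-- key: `cnt K (rk L i) = val L i` -/
lemma cnt_K_rk {i : ℕ} (hi : i < L.length) : cnt K (rk L i) = val L i := by
  rw [cnt_K_eq L K hperm]
  have : (Finset.range (L.foldr max 0)).filter (fun s => rk L i < cnt L s)
      = (Finset.range (L.foldr max 0)).filter (fun s => s < val L i) := by
    apply Finset.filter_congr
    intro s _
    exact rk_lt_cnt_iff L hi s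
  rw [this, filter_lt_range, Finset.card_range]
  exact min_eq_left (val_le_max L hi)

lemma mem_Dg' {p : ℕ × ℕ} :
    p ∈ Dg L K ↔ p.1 < L.length ∧ p.2 < K.length ∧ rk K p.2 < val L p.1 := by
  rw [mem_Dg]
  constructor
  · rintro ⟨h1, h2, h3⟩
    refine ⟨h1, h2, ?_⟩
    rw [← cnt_K_rk L K hperm h1]
    exact (rk_lt_cnt_iff K h2 _).mpr h3
  · rintro ⟨h1, h2, h3⟩
    refine ⟨h1, h2, ?_⟩
    rw [← cnt_K_rk L K hperm h1] at h3
    exact (rk_lt_cnt_iff K h2 _).mp h3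

lemma K_le_n {j : ℕ} (hj : j < K.length) : val K j ≤ L.length := by
  have hm : val K j ∈ conj L := hperm.mem_iff.mp (val_mem K hj)
  simp only [conj, List.mem_map, List.mem_range] at hm
  obtain ⟨s, -, hs⟩ := hm
  rw [← hs]
  exact le_trans (List.length_filter_le _ _) le_rfl

lemma rowComp_Dg (i : ℕ) : rowComp (Dg L K) i = val L i := by
  rcases Nat.lt_or_ge i L.length with hi | hi
  · have hfib : (Dg L K).filter (fun c => c.1 = i)
        = ((Finset.range K.length).filter (fun j => rk L i < val K j)).image
            (fun j => (i, j)) := by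
      ext p
      simp only [Finset.mem_filter, Finset.mem_image, Finset.mem_range, mem_Dg]
      constructor
      · rintro ⟨⟨h1, h2, h3⟩, h4⟩
        exact ⟨p.2, ⟨h2, h4 ▸ h3⟩, by rw [← h4]⟩
      · rintro ⟨j, ⟨hj1, hj2⟩, rfl⟩
        exact ⟨⟨hi, hj1, hj2⟩, rfl⟩
    rw [rowComp, hfib, Finset.card_image_of_injective _ (fun a b hab => by
      simpa using hab)]
    exact cnt_K_rk L K hperm hi
  · rw [val_eq_zero L hi, rowComp, Finset.card_eq_zero, Finset.filter_eq_empty_iff]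
    intro p hp
    have := (mem_Dg L K).mp hp
    omega

lemma colComp_Dg (j : ℕ) : colComp (Dg L K) j = val K j := by
  rcases Nat.lt_or_ge j K.length with hj | hj
  · have hfib : (Dg L K).filter (fun c => c.2 = j)
        = ((Finset.range L.length).filter (fun i => rk L i < val K j)).image
            (fun i => (i, j)) := by
      ext p
      simp only [Finset.mem_filter, Finset.mem_image, Finset.mem_range, mem_Dg]
      constructor
      · rintro ⟨⟨h1, h2, h3⟩, h4⟩
        exact ⟨p.1, ⟨h1, h4 ▸ h3⟩, by rw [← h4]⟩
      · rintro ⟨i, ⟨hi1, hi2⟩, rfl⟩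
        exact ⟨⟨hi1, hj, hi2⟩, rfl⟩
    rw [colComp, hfib, Finset.card_image_of_injective _ (fun a b hab => by
      simpa using hab), card_rk_lt]
    exact min_eq_left (K_le_n L K hperm hj)
  · rw [val_eq_zero K hj, colComp, Finset.card_eq_zero, Finset.filter_eq_empty_iff]
    intro p hp
    have := (mem_Dg L K).mp hp
    omega

end Main

lemma sub_box (L K : List ℕ) (E : Finset (ℕ × ℕ))
    (hr : ∀ i, rowComp E i = val L i) (hc : ∀ j, colComp E j = val K j) :
    ∀ p ∈ E, p.1 < L.length ∧ p.2 < K.length := by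
  intro p hp
  constructor
  · by_contra hle
    push_neg at hle
    have h0 : rowComp E p.1 = 0 := by rw [hr, val_eq_zero L hle]
    have : (E.filter (fun c => c.1 = p.1)).Nonempty := ⟨p, by simp [hp]⟩
    rw [rowComp, Finset.card_eq_zero] at h0
    rw [h0] at this
    exact Finset.not_nonempty_empty this
  · by_contra hle
    push_neg at hle
    have h0 : colComp E p.2 = 0 := by rw [hc, val_eq_zero K hle]
    have : (E.filter (fun c => c.2 = p.2)).Nonempty := ⟨p, by simp [hp]⟩
    rw [colComp, Finset.card_eq_zero] at h0
    rw [h0] at this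
    exact Finset.not_nonempty_empty this

/-- sum of column-ranks over a diagram, computed columnwise -/
lemma col_weight_sum (K : List ℕ) (F : Finset (ℕ × ℕ))
    (hb : ∀ p ∈ F, p.2 < K.length) (hc : ∀ j, colComp F j = val K j) :
    ∑ p ∈ F, rk K p.2 = ∑ j ∈ Finset.range K.length, val K j * rk K j := by
  rw [← Finset.sum_fiberwise_of_maps_to (g := Prod.snd) (t := Finset.range K.length)
    (fun p hp => Finset.mem_range.mpr (hb p hp)) (fun p => rk K p.2)]
  apply Finset.sum_congr rfl
  intro j _
  have : ∑ p ∈ F.filter (fun c => c.2 = j), rk K p.2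
      = ∑ _p ∈ F.filter (fun c => c.2 = j), rk K j := by
    apply Finset.sum_congr rfl
    intro p hp
    rw [(Finset.mem_filter.mp hp).2]
  rw [this, Finset.sum_const, smul_eq_mul, ← colComp, hc, mul_comm]

lemma fiber_injOn (K : List ℕ) (F : Finset (ℕ × ℕ)) (hb : ∀ p ∈ F, p.2 < K.length)
    (i : ℕ) : ∀ p ∈ F.filter (fun c => c.1 = i), ∀ q ∈ F.filter (fun c => c.1 = i),
      rk K p.2 = rk K q.2 → p = q := by
  intro p hp q hq hpq
  rw [Finset.mem_filter] at hp hq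
  have hp2 := hb p hp.1
  have hq2 := hb q hq.1
  have h2 : p.2 = q.2 := rk_injOn K (by simpa using hp2) (by simpa using hq2) hpq
  exact Prod.ext (hp.2.trans hq.2.symm) h2

lemma fiber_sum_eq (K : List ℕ) (F : Finset (ℕ × ℕ)) (hb : ∀ p ∈ F, p.2 < K.length)
    (i : ℕ) :
    ∑ p ∈ F.filter (fun c => c.1 = i), rk K p.2
      = ∑ x ∈ (F.filter (fun c => c.1 = i)).image (fun p => rk K p.2), x := by
  rw [Finset.sum_image (fiber_injOn K F hb i)]

lemma fiber_card_eq (K : List ℕ) (F : Finset (ℕ × ℕ)) (hb : ∀ p ∈ F, p.2 < K.length)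
    (i : ℕ) :
    ((F.filter (fun c => c.1 = i)).image (fun p => rk K p.2)).card = rowComp F i := by
  rw [rowComp]
  apply Finset.card_image_of_injOn
  intro p hp q hq
  exact fiber_injOn K F hb i p hp q hq

section Main2

variable (L K : List ℕ) (hperm : K.Perm (conj L))

include hperm

lemma T_Dg {i : ℕ} (hi : i < L.length) :
    ((Dg L K).filter (fun c => c.1 = i)).image (fun p => rk K p.2)
      = Finset.range (val L i) := by
  have hfib : (Dg L K).filter (fun c => c.1 = i)
      = ((Finset.range K.length).filter (fun j => rk K j < val L i)).image
          (fun j => (i, j)) := by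
    ext p
    simp only [Finset.mem_filter, Finset.mem_image, Finset.mem_range,
      mem_Dg' L K hperm]
    constructor
    · rintro ⟨⟨h1, h2, h3⟩, h4⟩
      exact ⟨p.2, ⟨h2, h4 ▸ h3⟩, by rw [← h4]⟩
    · rintro ⟨j, ⟨hj1, hj2⟩, rfl⟩
      exact ⟨⟨hi, hj1, hj2⟩, rfl⟩
  rw [hfib, Finset.image_image]
  have h1 := Finset.filter_image (s := Finset.range K.length) (f := rk K)
    (p := fun x => x < val L i)
  rw [rk_image, filter_lt_range] at h1
  have hle : val L i ≤ K.length := by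
    rw [len_K L K hperm]; exact val_le_max L hi
  rw [min_eq_left hle] at h1
  exact h1.symm

lemma unique_diagram (E : Finset (ℕ × ℕ))
    (hr : ∀ i, rowComp E i = val L i) (hc : ∀ j, colComp E j = val K j) :
    E = Dg L K := by
  have hboxE := sub_box L K E hr hc
  have hboxD := sub_box L K (Dg L K) (rowComp_Dg L K hperm) (colComp_Dg L K hperm)
  have hbE2 : ∀ p ∈ E, p.2 < K.length := fun p hp => (hboxE p hp).2
  have hbD2 : ∀ p ∈ Dg L K, p.2 < K.length := fun p hp => (hboxD p hp).2
  -- the two total weight sums agree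
  have hS : ∑ p ∈ E, rk K p.2 = ∑ p ∈ Dg L K, rk K p.2 := by
    rw [col_weight_sum K E hbE2 hc,
      col_weight_sum K (Dg L K) hbD2 (colComp_Dg L K hperm)]
  -- decompose along rows
  have hdecE : ∑ p ∈ E, rk K p.2
      = ∑ i ∈ Finset.range L.length, ∑ p ∈ E.filter (fun c => c.1 = i), rk K p.2 :=
    (Finset.sum_fiberwise_of_maps_to
      (fun p hp => Finset.mem_range.mpr (hboxE p hp).1) _).symm
  have hdecD : ∑ p ∈ Dg L K, rk K p.2
      = ∑ i ∈ Finset.range L.length,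
          ∑ p ∈ (Dg L K).filter (fun c => c.1 = i), rk K p.2 :=
    (Finset.sum_fiberwise_of_maps_to
      (fun p hp => Finset.mem_range.mpr (hboxD p hp).1) _).symm
  -- D's row sums are the triangle sums
  have hDrow : ∀ i ∈ Finset.range L.length,
      ∑ p ∈ (Dg L K).filter (fun c => c.1 = i), rk K p.2
        = ∑ x ∈ Finset.range (val L i), x := by
    intro i hi
    rw [Finset.mem_range] at hi
    rw [fiber_sum_eq K (Dg L K) hbD2 i, T_Dg L K hperm hi]
  -- E's row sums dominate the triangle sums
  have hTcard : ∀ i, ((E.filter (fun c => c.1 = i)).image (fun p => rk K p.2)).card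
      = val L i := by
    intro i
    rw [fiber_card_eq K E hbE2 i, hr]
  have hErow_ge : ∀ i ∈ Finset.range L.length,
      ∑ x ∈ Finset.range (val L i), x
        ≤ ∑ p ∈ E.filter (fun c => c.1 = i), rk K p.2 := by
    intro i _
    rw [fiber_sum_eq K E hbE2 i]
    exact (tri (val L i) _ (hTcard i)).1
  -- equality forced
  have hsum_eq : ∑ i ∈ Finset.range L.length,
        ∑ p ∈ E.filter (fun c => c.1 = i), rk K p.2
      = ∑ i ∈ Finset.range L.length, ∑ x ∈ Finset.range (val L i), x := by
    rw [← hdecE, hS, hdecD]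
    exact Finset.sum_congr rfl hDrow
  have hall := (Finset.sum_eq_sum_iff_of_le hErow_ge).mp hsum_eq.symm
  -- each row of E equals the initial segment
  have hT : ∀ i, i < L.length →
      (E.filter (fun c => c.1 = i)).image (fun p => rk K p.2)
        = Finset.range (val L i) := by
    intro i hi
    apply (tri (val L i) _ (hTcard i)).2
    rw [← fiber_sum_eq K E hbE2 i]
    exact (hall i (Finset.mem_range.mpr hi)).symm
  -- conclude
  ext p
  constructor
  · intro hp
    obtain ⟨h1, h2⟩ := hboxE p hp
    rw [mem_Dg' L K hperm]
    refine ⟨h1, h2, ?_⟩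
    have : rk K p.2 ∈ (E.filter (fun c => c.1 = p.1)).image (fun q => rk K q.2) :=
      Finset.mem_image_of_mem _ (Finset.mem_filter.mpr ⟨hp, rfl⟩)
    rw [hT p.1 h1] at this
    exact Finset.mem_range.mp this
  · intro hp
    rw [mem_Dg' L K hperm] at hp
    obtain ⟨h1, h2, h3⟩ := hp
    have : rk K p.2 ∈ (E.filter (fun c => c.1 = p.1)).image (fun q => rk K q.2) := by
      rw [hT p.1 h1]
      exact Finset.mem_range.mpr h3
    obtain ⟨q, hq, hq2⟩ := Finset.mem_image.mp this
    have hq' := Finset.mem_filter.mp hq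
    have : q.2 = p.2 := rk_injOn K (by simpa using hbE2 q hq'.1) (by simpa using h2) hq2
    have hqp : q = p := Prod.ext hq'.2 this
    rw [← hqp]
    exact hq'.1

end Main2

def Fx (L : List ℕ) : ℕ → ℕ := fun i => if i < L.length then rk L i else i

lemma Fx_lt_iff (L : List ℕ) (i : ℕ) : Fx L i < L.length ↔ i < L.length := by
  rw [Fx]
  split
  · exact ⟨fun _ => by assumption, fun h => rk_lt L h⟩
  · omega

lemma Fx_bij (L : List ℕ) : Function.Bijective (Fx L) := by
  constructor
  · intro x y hxy
    have hx := Fx_lt_iff L x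
    have hy := Fx_lt_iff L y
    rcases Nat.lt_or_ge x L.length with h1 | h1 <;>
      rcases Nat.lt_or_ge y L.length with h2 | h2
    · exact rk_injOn L (by simpa using h1) (by simpa using h2)
        (by rwa [Fx, Fx, if_pos h1, if_pos h2] at hxy)
    · omega
    · omega
    · rwa [Fx, Fx, if_neg (by omega), if_neg (by omega)] at hxy
  · intro a
    rcases Nat.lt_or_ge a L.length with ha | ha
    · have : a ∈ (Finset.range L.length).image (rk L) := by
        rw [rk_image]; simpa using ha
      obtain ⟨i, hi, hia⟩ := Finset.mem_image.mp this
      rw [Finset.mem_range] at hi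
      exact ⟨i, by rwa [Fx, if_pos hi]⟩
    · exact ⟨a, by rw [Fx, if_neg (by omega)]⟩

section Main3

variable (L K : List ℕ) (hperm : K.Perm (conj L))

/-- the Young diagram underlying `Dg L K` -/
def Yd : YoungDiagram where
  cells := (Finset.range L.length ×ˢ Finset.range K.length).filter
    (fun p => p.2 < cnt K p.1)
  isLowerSet := by
    intro a b hba hmem
    simp only [Finset.coe_filter, Set.mem_setOf_eq, Finset.mem_product,
      Finset.mem_range] at hmem ⊢
    obtain ⟨hb1, hb2⟩ := hba
    refine ⟨⟨by omega, by omega⟩, ?_⟩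
    exact lt_of_le_of_lt hb2 (lt_of_lt_of_le hmem.2 (cnt_antitone K hb1))

lemma mem_Yd {p : ℕ × ℕ} :
    p ∈ (Yd L K).cells ↔ p.1 < L.length ∧ p.2 < K.length ∧ p.2 < cnt K p.1 := by
  simp [Yd, Finset.mem_filter, Finset.mem_product, and_assoc]

include hperm

lemma special_Dg : IsSpecialDiagram (Dg L K) := by
  classical
  set f := Function.invFun (Fx L) with hf
  set g := Function.invFun (Fx K) with hg
  have hfL := Fx_bij L
  have hfK := Fx_bij K
  have hfbij : Function.Bijective f :=
    Function.bijective_iff_has_inverse.mpr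
      ⟨Fx L, Function.rightInverse_invFun hfL.surjective,
        Function.leftInverse_invFun hfL.injective⟩
  have hgbij : Function.Bijective g :=
    Function.bijective_iff_has_inverse.mpr
      ⟨Fx K, Function.rightInverse_invFun hfK.surjective,
        Function.leftInverse_invFun hfK.injective⟩
  refine ⟨f, g, hfbij, hgbij, Yd L K, ?_⟩
  ext p
  simp only [Finset.mem_image]
  constructor
  · intro hp
    obtain ⟨h1, h2, h3⟩ := (mem_Dg' L K hperm).mp hp
    refine ⟨(Fx L p.1, Fx K p.2), ?_, ?_⟩
    · rw [mem_Yd]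
      refine ⟨?_, ?_, ?_⟩
      · simpa using (Fx_lt_iff L p.1).mpr h1
      · simpa using (Fx_lt_iff K p.2).mpr h2
      · show Fx K p.2 < cnt K (Fx L p.1)
        rw [Fx, Fx, if_pos h1, if_pos h2, cnt_K_rk L K hperm h1]
        exact h3
    · show (f (Fx L p.1), g (Fx K p.2)) = p
      have e1 : f (Fx L p.1) = p.1 := Function.leftInverse_invFun hfL.injective p.1
      have e2 : g (Fx K p.2) = p.2 := Function.leftInverse_invFun hfK.injective p.2
      rw [e1, e2]
  · rintro ⟨c, hc, rfl⟩
    obtain ⟨h1, h2, h3⟩ := (mem_Yd L K).mp hc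
    have hfc : Fx L (f c.1) = c.1 := Function.rightInverse_invFun hfL.surjective c.1
    have hgc : Fx K (g c.2) = c.2 := Function.rightInverse_invFun hfK.surjective c.2
    have hfn : f c.1 < L.length := by
      rw [← Fx_lt_iff L, hfc]; exact h1
    have hgk : g c.2 < K.length := by
      rw [← Fx_lt_iff K, hgc]; exact h2
    rw [mem_Dg' L K hperm]
    refine ⟨hfn, hgk, ?_⟩
    have hrkL : rk L (f c.1) = c.1 := by rwa [Fx, if_pos hfn] at hfc
    have hrkK : rk K (g c.2) = c.2 := by rwa [Fx, if_pos hgk] at hgc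
    show rk K (g c.2) < val L (f c.1)
    rw [hrkK, ← cnt_K_rk L K hperm hfn, hrkL]
    exact h3

lemma principal_Dg (hLpos : ∀ i, i < L.length → 0 < val L i)
    (hKpos : ∀ j, j < K.length → 0 < val K j) :
    IsPrincipalDiagram (Dg L K) := by
  constructor
  · intro c hc i hi
    have h1 : c.1 < L.length := ((mem_Dg L K).mp hc).1
    have hi' : i < L.length := by omega
    have hpos : 0 < rowComp (Dg L K) i := by
      rw [rowComp_Dg L K hperm]; exact hLpos i hi'
    rw [rowComp, Finset.card_pos] at hpos
    obtain ⟨⟨q1, q2⟩, hq⟩ := hpos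
    rw [Finset.mem_filter] at hq
    have hq1 : q1 = i := hq.2
    subst hq1
    exact ⟨q2, hq.1⟩
  · intro c hc j hj
    have h2 : c.2 < K.length := ((mem_Dg L K).mp hc).2.1
    have hj' : j < K.length := by omega
    have hpos : 0 < colComp (Dg L K) j := by
      rw [colComp_Dg L K hperm]; exact hKpos j hj'
    rw [colComp, Finset.card_pos] at hpos
    obtain ⟨⟨q1, q2⟩, hq⟩ := hpos
    rw [Finset.mem_filter] at hq
    have hq2 : q2 = j := hq.2
    subst hq2
    exact ⟨q1, hq.1⟩

end Main3

end S18

/-- if `λ` and `μ` are compositions of `m` with `λ'' = μ'` (i.e. `μ` is a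
rearrangement of the conjugate `λ'`), then there is a unique diagram with
row-composition `λ` and column-composition `μ`, and it is a special diagram. -/


theorem stmt18 (m : ℕ) (lam mu : Composition m)
    (h : (mu.blocks : Multiset ℕ) =
      (((List.range (lam.blocks.foldr max 0)).map
          (fun j => (lam.blocks.filter (fun a => decide (j < a))).length)) : List ℕ)) :
    (∃! D : Finset (ℕ × ℕ), IsPrincipalDiagram D ∧
        (∀ i, rowComp D i = lam.blocks.getD i 0) ∧
        (∀ j, colComp D j = mu.blocks.getD j 0)) ∧
    (∀ D : Finset (ℕ × ℕ), IsPrincipalDiagram D →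
        (∀ i, rowComp D i = lam.blocks.getD i 0) →
        (∀ j, colComp D j = mu.blocks.getD j 0) →
        IsSpecialDiagram D) := by
  set L := lam.blocks with hL
  set K := mu.blocks with hK
  have hperm : K.Perm (S18.conj L) := Multiset.coe_eq_coe.mp h
  have hLpos : ∀ i, i < L.length → 0 < S18.val L i :=
    fun i hi => lam.blocks_pos (S18.val_mem L hi)
  have hKpos : ∀ j, j < K.length → 0 < S18.val K j :=
    fun j hj => mu.blocks_pos (S18.val_mem K hj)
  have hrow : ∀ i, rowComp (S18.Dg L K) i = L.getD i 0 := S18.rowComp_Dg L K hperm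
  have hcol : ∀ j, colComp (S18.Dg L K) j = K.getD j 0 := S18.colComp_Dg L K hperm
  constructor
  · refine ⟨S18.Dg L K, ⟨S18.principal_Dg L K hperm hLpos hKpos, hrow, hcol⟩, ?_⟩
    rintro E ⟨-, hE2, hE3⟩
    exact S18.unique_diagram L K hperm E hE2 hE3
  · intro D _ hD2 hD3
    rw [S18.unique_diagram L K hperm D hD2 hD3]
    exact S18.special_Dg L K hperm
end
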